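/- Let X be a real Hilbert space, F, G : X → ℝ convex with G(x) ≥ ⟨x, y*⟩ − G*(y*) for all x and all y* (Fenchel–Young), where G*(y*) = sup_x (⟨x,y*⟩ − G(x)) is assumed finite. Define J(x) = F(x) − G(x) and J*(y*) = G*(y*) − F*(y*). Then inf over x of J(x) = inf over y* of J*(y*), provided both infima are finite and G* , F* are the Fenchel conjugates (Toland duality for D.C. functions, with the convention sup of −∞ handled by finiteness assumptions). -/

import Mathlib

/-- Toland duality for D.C. functions. `X` a real Hilbert space,
`F, G : X → ℝ` convex, `F*` and `G*` their (finite) Fenchel conjugates (expressed via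
`IsLUB`), and `G** = G` (G convex lsc). If `J = F − G` and `J* = G* − F*` have finite
infima `a` and `b` respectively (expressed via `IsGLB`), then `a = b`, i.e.
`inf_x J(x) = inf_{y*} J*(y*)`. -/
theorem stmt2
    {X : Type*} [NormedAddCommGroup X] [InnerProductSpace ℝ X] [CompleteSpace X]
    (F G : X → ℝ) (Fstar Gstar : X → ℝ)
    (hFconv : ConvexOn ℝ Set.univ F) (hGconv : ConvexOn ℝ Set.univ G)
    (hFstar : ∀ ystar : X,
      IsLUB (Set.range fun x : X => (inner ℝ x ystar : ℝ) - F x) (Fstar ystar))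
    (hGstar : ∀ ystar : X,
      IsLUB (Set.range fun x : X => (inner ℝ x ystar : ℝ) - G x) (Gstar ystar))
    (hGbiconj : ∀ x : X,
      IsLUB (Set.range fun ystar : X => (inner ℝ x ystar : ℝ) - Gstar ystar) (G x))
    (a b : ℝ)
    (ha : IsGLB (Set.range fun x : X => F x - G x) a)
    (hb : IsGLB (Set.range fun ystar : X => Gstar ystar - Fstar ystar) b) :
    a = b := by
  apply le_antisymm
  · -- a ≤ b: show a is a lower bound for the dual range
    refine hb.2 ?_
    rintro _ ⟨y, rfl⟩
    -- show a ≤ Gstar y - Fstar y, i.e. Fstar y ≤ Gstar y - a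
    have h1 : Fstar y ≤ Gstar y - a := by
      refine (hFstar y).2 ?_
      rintro _ ⟨x, rfl⟩
      have h2 : (inner ℝ x y : ℝ) - G x ≤ Gstar y := (hGstar y).1 ⟨x, rfl⟩
      have h3 : a ≤ F x - G x := ha.1 ⟨x, rfl⟩
      dsimp only; linarith
    dsimp only; linarith
  · -- b ≤ a
    refine ha.2 ?_
    rintro _ ⟨x, rfl⟩
    have h1 : G x ≤ F x - b := by
      refine (hGbiconj x).2 ?_
      rintro _ ⟨y, rfl⟩
      have h2 : (inner ℝ x y : ℝ) - F x ≤ Fstar y := (hFstar y).1 ⟨x, rfl⟩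
      have h3 : b ≤ Gstar y - Fstar y := hb.1 ⟨y, rfl⟩
      dsimp only; linarith
    dsimp only; linarith
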